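/- arXiv:1904.07052 — 4 statements merged into one kernel-verified Lean document; each statement's English description precedes it below -/
import Mathlib

section
/- Suppose x(ε) = x⁰ − εα(x⁰ − γ⁰) + R with ‖R‖ ≤ σ ε^{3/2} ‖x⁰ − γ⁰‖^{3/2}, and ‖γ(ε) − γ⁰‖ ≤ εν, with 0 < εα < 1. Then ‖x(ε) − γ(ε)‖ ≤ ‖x⁰ − γ⁰‖·(1 − ε(α − σ√(ε‖x⁰ − γ⁰‖))) + εν. -/
lemma rpow_three_halves {t : ℝ} (ht : 0 ≤ t) : t ^ ((3:ℝ)/2) = t * Real.sqrt t := by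
  rcases eq_or_lt_of_le ht with h | h
  · rw [← h, Real.zero_rpow (by norm_num), Real.sqrt_zero, mul_zero]
  · rw [Real.sqrt_eq_rpow, show (3:ℝ)/2 = 1 + 1/2 by norm_num, Real.rpow_add h,
      Real.rpow_one]

/-- One-step contraction estimate from the Volterra expansion. -/
theorem stmt_10 {n : ℕ} (x0 γ0 xε γε R : EuclideanSpace ℝ (Fin n))
    (α σ ε ν : ℝ) (hα : 0 < α) (hσ : 0 < σ) (hε : 0 < ε) (hν : 0 < ν)
    (hεα : ε * α < 1)
    (hx : xε = x0 - (ε * α) • (x0 - γ0) + R)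
    (hR : ‖R‖ ≤ σ * ε ^ ((3:ℝ)/2) * ‖x0 - γ0‖ ^ ((3:ℝ)/2))
    (hγ : ‖γε - γ0‖ ≤ ε * ν) :
    ‖xε - γε‖ ≤ ‖x0 - γ0‖ * (1 - ε * (α - σ * Real.sqrt (ε * ‖x0 - γ0‖))) + ε * ν := by
  set d := x0 - γ0 with hd
  have hdn : (0:ℝ) ≤ ‖d‖ := norm_nonneg _
  have hsplit : xε - γε = ((1 - ε * α) • d + R) + (γ0 - γε) := by
    rw [hx, hd]; module
  have htri : ‖xε - γε‖ ≤ ‖(1 - ε * α) • d‖ + ‖R‖ + ‖γ0 - γε‖ := by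
    rw [hsplit]
    exact le_trans (norm_add_le _ _) (by gcongr; exact norm_add_le _ _)
  have h1 : ‖(1 - ε * α) • d‖ = (1 - ε * α) * ‖d‖ := by
    rw [norm_smul, Real.norm_eq_abs, abs_of_pos (by linarith)]
  have h2 : σ * ε ^ ((3:ℝ)/2) * ‖d‖ ^ ((3:ℝ)/2)
      = σ * (ε * ‖d‖ * Real.sqrt (ε * ‖d‖)) := by
    rw [mul_assoc, ← Real.mul_rpow hε.le hdn, rpow_three_halves (by positivity)]
  have h3 : ‖γ0 - γε‖ ≤ ε * ν := by rw [norm_sub_rev]; exact hγ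
  rw [h2] at hR
  rw [h1] at htri
  have hs : 0 ≤ Real.sqrt (ε * ‖d‖) := Real.sqrt_nonneg _
  nlinarith [htri, hR, h3]
end

section
/- Let κ ∈ ℕ be a positive integer, ε > 0, and b ∈ ℝ. Define u(t) = √(4π κ |b| / ε) cos(2πκ t/ε) and v(t) = sign(b) √(4π κ |b| / ε) sin(2πκ t/ε). Then ∫₀^ε u(t) dt = 0, ∫₀^ε v(t) dt = 0, and ∫₀^ε ∫₀^t (u(t)v(s) − v(t)u(s)) ds dt = −2εb. -/
open Real intervalIntegral

lemma int_cos_mul (c T : ℝ) (hc : c ≠ 0) :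
    ∫ t in (0:ℝ)..T, Real.cos (c * t) = Real.sin (c * T) / c := by
  rw [intervalIntegral.integral_comp_mul_left Real.cos hc]
  simp [integral_cos, div_eq_inv_mul]

lemma int_sin_mul (c T : ℝ) (hc : c ≠ 0) :
    ∫ t in (0:ℝ)..T, Real.sin (c * t) = (1 - Real.cos (c * T)) / c := by
  rw [intervalIntegral.integral_comp_mul_left Real.sin hc]
  simp [integral_sin, div_eq_inv_mul, mul_sub]

lemma real_sign_mul_abs (b : ℝ) : Real.sign b * |b| = b := by
  rcases lt_trichotomy b 0 with h | h | h
  · rw [Real.sign_of_neg h, abs_of_neg h]; ring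
  · simp [h]
  · rw [Real.sign_of_pos h, abs_of_pos h]; ring

/-- Averaging identity: the oscillating controls have zero mean and produce a
net area −2εb over one sampling period. -/
theorem stmt_11 (κ : ℕ) (hκ : 0 < κ) (ε : ℝ) (hε : 0 < ε) (b : ℝ)
    (u v : ℝ → ℝ)
    (hu : ∀ t, u t = Real.sqrt (4 * π * κ * |b| / ε) * Real.cos (2 * π * κ * t / ε))
    (hv : ∀ t, v t = Real.sign b * Real.sqrt (4 * π * κ * |b| / ε) *
      Real.sin (2 * π * κ * t / ε)) :
    (∫ t in (0:ℝ)..ε, u t) = 0 ∧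
    (∫ t in (0:ℝ)..ε, v t) = 0 ∧
    (∫ t in (0:ℝ)..ε, ∫ s in (0:ℝ)..t, (u t * v s - v t * u s)) = -2 * ε * b := by
  have hεne : ε ≠ 0 := hε.ne'
  have hκR : (0:ℝ) < κ := by exact_mod_cast hκ
  set c : ℝ := 2 * π * κ / ε with hc_def
  have hc : c ≠ 0 := by
    have : (0:ℝ) < 2 * π * κ / ε := by positivity
    exact this.ne'
  set A : ℝ := Real.sqrt (4 * π * κ * |b| / ε) with hA_def
  have harg : ∀ t : ℝ, 2 * π * κ * t / ε = c * t := by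
    intro t; rw [hc_def]; field_simp
  have hu' : ∀ t, u t = A * Real.cos (c * t) := by
    intro t; rw [hu t, harg t]
  have hv' : ∀ t, v t = Real.sign b * A * Real.sin (c * t) := by
    intro t; rw [hv t, harg t]
  have hcε : c * ε = (κ:ℝ) * (2 * π) := by
    rw [hc_def, div_mul_cancel₀ _ hεne]; ring
  have hsin : Real.sin (c * ε) = 0 := by
    rw [hcε]
    have : ((κ:ℝ) * (2 * π)) = ((2 * κ : ℕ) : ℝ) * π := by push_cast; ring
    rw [this, Real.sin_nat_mul_pi]
  have hcos : Real.cos (c * ε) = 1 := by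
    rw [hcε, Real.cos_nat_mul_two_pi]
  have hA2 : A ^ 2 = 4 * π * κ * |b| / ε := by
    rw [hA_def, Real.sq_sqrt]; positivity
  refine ⟨?_, ?_, ?_⟩
  · simp only [hu']
    rw [intervalIntegral.integral_const_mul, int_cos_mul c ε hc, hsin]
    simp
  · simp only [hv']
    rw [intervalIntegral.integral_const_mul, int_sin_mul c ε hc, hcos]
    simp
  · have hinner : ∀ t : ℝ, (∫ s in (0:ℝ)..t, (u t * v s - v t * u s)) =
        Real.sign b * A ^ 2 / c * (Real.cos (c * t) - 1) := by
      intro t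
      have hui : IntervalIntegrable u MeasureTheory.volume 0 t := by
        have : Continuous u := by
          have h : u = fun s => A * Real.cos (c * s) := funext hu'
          rw [h]
          exact continuous_const.mul (Real.continuous_cos.comp (continuous_const.mul continuous_id))
        exact this.intervalIntegrable 0 t
      have hvi : IntervalIntegrable v MeasureTheory.volume 0 t := by
        have : Continuous v := by
          have h : v = fun s => Real.sign b * A * Real.sin (c * s) := funext hv'
          rw [h]
          exact continuous_const.mul (Real.continuous_sin.comp (continuous_const.mul continuous_id))
        exact this.intervalIntegrable 0 t
      rw [intervalIntegral.integral_sub ((hvi.const_mul _)) (hui.const_mul _)]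
      rw [intervalIntegral.integral_const_mul, intervalIntegral.integral_const_mul]
      have h1 : (∫ s in (0:ℝ)..t, v s) = Real.sign b * A * ((1 - Real.cos (c * t)) / c) := by
        simp only [hv']
        rw [intervalIntegral.integral_const_mul, int_sin_mul c t hc]
      have h2 : (∫ s in (0:ℝ)..t, u s) = A * (Real.sin (c * t) / c) := by
        simp only [hu']
        rw [intervalIntegral.integral_const_mul, int_cos_mul c t hc]
      rw [h1, h2, hu' t, hv' t]
      have hsc := Real.sin_sq_add_cos_sq (c * t)
      linear_combination (-(Real.sign b * A ^ 2 / c)) * hsc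
    simp only [hinner]
    have hcont : Continuous fun t : ℝ => Real.cos (c * t) := by fun_prop
    have hout : (∫ t in (0:ℝ)..ε, (Real.cos (c * t) - 1)) = -ε := by
      rw [intervalIntegral.integral_sub (hcont.intervalIntegrable 0 ε) intervalIntegrable_const,
        int_cos_mul c ε hc, hsin, intervalIntegral.integral_const]
      simp
    rw [intervalIntegral.integral_const_mul, hout, hA2, hc_def]
    have hsb : Real.sign b * |b| = b := real_sign_mul_abs b
    have hπ : π ≠ 0 := pi_ne_zero
    have hκne : (κ:ℝ) ≠ 0 := hκR.ne'
    conv_rhs => rw [← hsb]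
    field_simp
    ring
end

section
/- Consider the underwater vehicle fields on D = {x ∈ ℝ⁶ : |x₅| < π/2}: f₁(x) = (cos x₅ cos x₆, cos x₅ sin x₆, −sin x₅, 0,0,0)ᵀ, f₂(x) = (0,0,0,1,0,0)ᵀ, f₃(x) = (0,0,0, sin x₄ tan x₅, cos x₄, sin x₄ sec x₅)ᵀ, f₄(x) = (0,0,0, cos x₄ tan x₅, −sin x₄, cos x₄ sec x₅)ᵀ. Then for every x ∈ D the six vectors f₁(x), f₂(x), f₃(x), f₄(x), [f₁,f₃](x), [f₁,f₄](x) are linearly independent, i.e., span ℝ⁶. -/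
open Real

noncomputable section

abbrev V6 := Fin 6 → ℝ

/-- Lie bracket of vector fields: [f,g](x) = Dg(x)f(x) − Df(x)g(x). -/
def lieBracket (f g : V6 → V6) (x : V6) : V6 :=
  fderiv ℝ g x (f x) - fderiv ℝ f x (g x)

def f₁ (x : V6) : V6 :=
  ![Real.cos (x 4) * Real.cos (x 5), Real.cos (x 4) * Real.sin (x 5),
    -Real.sin (x 4), 0, 0, 0]

def f₂ (_ : V6) : V6 := ![0, 0, 0, 1, 0, 0]

def f₃ (x : V6) : V6 :=
  ![0, 0, 0, Real.sin (x 3) * Real.tan (x 4), Real.cos (x 3),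
    Real.sin (x 3) * (1 / Real.cos (x 4))]

def f₄ (x : V6) : V6 :=
  ![0, 0, 0, Real.cos (x 3) * Real.tan (x 4), -Real.sin (x 3),
    Real.cos (x 3) * (1 / Real.cos (x 4))]

@[simp] lemma vec6_five {α : Type*} (a b c d e f : α) : ![a,b,c,d,e,f] (5 : Fin 6) = f := rfl

def P (i : Fin 6) : V6 →L[ℝ] ℝ := ContinuousLinearMap.proj i

lemma hasF_coord (i : Fin 6) (x : V6) : HasFDerivAt (fun y : V6 => y i) (P i) x :=
  hasFDerivAt_apply i x

lemma hasF_sin (i : Fin 6) (x : V6) :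
    HasFDerivAt (fun y : V6 => Real.sin (y i)) (Real.cos (x i) • P i) x := by
  have := (Real.hasDerivAt_sin (x i)).comp_hasFDerivAt x (hasF_coord i x); exact this

lemma hasF_cos (i : Fin 6) (x : V6) :
    HasFDerivAt (fun y : V6 => Real.cos (y i)) ((-Real.sin (x i)) • P i) x := by
  have := (Real.hasDerivAt_cos (x i)).comp_hasFDerivAt x (hasF_coord i x); exact this

lemma hasF_tan (i : Fin 6) (x : V6) (h : Real.cos (x i) ≠ 0) :
    HasFDerivAt (fun y : V6 => Real.tan (y i)) ((1 / Real.cos (x i) ^ 2) • P i) x := by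
  have := (Real.hasDerivAt_tan h).comp_hasFDerivAt x (hasF_coord i x); exact this

lemma hasF_invcos (i : Fin 6) (x : V6) (h : Real.cos (x i) ≠ 0) :
    HasFDerivAt (fun y : V6 => 1 / Real.cos (y i))
      ((Real.sin (x i) / Real.cos (x i) ^ 2) • P i) x := by
  have hd : HasDerivAt (fun t : ℝ => 1 / Real.cos t)
      (Real.sin (x i) / Real.cos (x i) ^ 2) (x i) := by
    simpa [one_div, neg_div, neg_neg, Pi.inv_def] using (Real.hasDerivAt_cos (x i)).inv h
  have := hd.comp_hasFDerivAt x (hasF_coord i x); exact this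

lemma hasF_f₁ (x : V6) : HasFDerivAt f₁ (ContinuousLinearMap.pi
    ![(-(Real.sin (x 4) * Real.cos (x 5))) • P 4 + (-(Real.cos (x 4) * Real.sin (x 5))) • P 5,
      (-(Real.sin (x 4) * Real.sin (x 5))) • P 4 + (Real.cos (x 4) * Real.cos (x 5)) • P 5,
      (-Real.cos (x 4)) • P 4, 0, 0, 0]) x := by
  apply hasFDerivAt_pi''
  intro i
  fin_cases i <;>
    simp only [f₁, ContinuousLinearMap.proj_pi, Matrix.cons_val_zero, Matrix.cons_val_one,
      Matrix.head_cons, Matrix.cons_val_succ, Fin.isValue, Fin.reduceFinMk, Matrix.cons_val]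
  · have h := (hasF_cos 4 x).mul (hasF_cos 5 x)
    convert h using 1; exact rfl; exact rfl; ext v; simp [P, Matrix.cons_val_succ, vec6_five]; ring
  · have h := (hasF_cos 4 x).mul (hasF_sin 5 x)
    convert h using 1; exact rfl; exact rfl; ext v; simp [P, Matrix.cons_val_succ, vec6_five]; ring
  · have h := (hasF_sin 4 x).neg
    convert h using 1; ext v; simp [P, Matrix.cons_val_succ, vec6_five]; exact neg_smul _ _
  · exact hasFDerivAt_const 0 x
  · exact hasFDerivAt_const 0 x
  · exact hasFDerivAt_const 0 x

lemma hasF_f₃ (x : V6) (h : Real.cos (x 4) ≠ 0) : HasFDerivAt f₃ (ContinuousLinearMap.pi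
    ![0, 0, 0,
      (Real.cos (x 3) * Real.tan (x 4)) • P 3 + (Real.sin (x 3) * (1 / Real.cos (x 4) ^ 2)) • P 4,
      (-Real.sin (x 3)) • P 3,
      (Real.cos (x 3) * (1 / Real.cos (x 4))) • P 3
        + (Real.sin (x 3) * (Real.sin (x 4) / Real.cos (x 4) ^ 2)) • P 4]) x := by
  apply hasFDerivAt_pi''
  intro i
  fin_cases i <;>
    simp only [f₃, ContinuousLinearMap.proj_pi, Matrix.cons_val_zero, Matrix.cons_val_one,
      Matrix.head_cons, Matrix.cons_val_succ, Fin.isValue, Fin.reduceFinMk, Matrix.cons_val]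
  · exact hasFDerivAt_const 0 x
  · exact hasFDerivAt_const 0 x
  · exact hasFDerivAt_const 0 x
  · have hh := (hasF_sin 3 x).mul (hasF_tan 4 x h)
    convert hh using 1; exact rfl; exact rfl; ext v; simp [P, Matrix.cons_val_succ, vec6_five]; ring
  · exact hasF_cos 3 x
  · have hh := (hasF_sin 3 x).mul (hasF_invcos 4 x h)
    convert hh using 1; exact rfl; exact rfl; ext v; simp [P, Matrix.cons_val_succ, vec6_five]; ring

lemma hasF_f₄ (x : V6) (h : Real.cos (x 4) ≠ 0) : HasFDerivAt f₄ (ContinuousLinearMap.pi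
    ![0, 0, 0,
      (-(Real.sin (x 3) * Real.tan (x 4))) • P 3 + (Real.cos (x 3) * (1 / Real.cos (x 4) ^ 2)) • P 4,
      (-Real.cos (x 3)) • P 3,
      (-(Real.sin (x 3) * (1 / Real.cos (x 4)))) • P 3
        + (Real.cos (x 3) * (Real.sin (x 4) / Real.cos (x 4) ^ 2)) • P 4]) x := by
  apply hasFDerivAt_pi''
  intro i
  fin_cases i <;>
    simp only [f₄, ContinuousLinearMap.proj_pi, Matrix.cons_val_zero, Matrix.cons_val_one,
      Matrix.head_cons, Matrix.cons_val_succ, Fin.isValue, Fin.reduceFinMk, Matrix.cons_val]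
  · exact hasFDerivAt_const 0 x
  · exact hasFDerivAt_const 0 x
  · exact hasFDerivAt_const 0 x
  · have hh := (hasF_cos 3 x).mul (hasF_tan 4 x h)
    convert hh using 1; exact rfl; exact rfl; ext v; simp [P, Matrix.cons_val_succ, vec6_five]; ring
  · have hh := (hasF_sin 3 x).neg
    convert hh using 1; ext v; simp [P, Matrix.cons_val_succ, vec6_five]; exact neg_smul _ _
  · have hh := (hasF_cos 3 x).mul (hasF_invcos 4 x h)
    convert hh using 1; exact rfl; exact rfl; ext v; simp [P, Matrix.cons_val_succ, vec6_five]; ring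

lemma lie13_eq (x : V6) (h : Real.cos (x 4) ≠ 0) :
    lieBracket f₁ f₃ x =
      ![Real.cos (x 3) * Real.sin (x 4) * Real.cos (x 5) + Real.sin (x 3) * Real.sin (x 5),
        Real.cos (x 3) * Real.sin (x 4) * Real.sin (x 5) - Real.sin (x 3) * Real.cos (x 5),
        Real.cos (x 3) * Real.cos (x 4), 0, 0, 0] := by
  unfold lieBracket
  rw [(hasF_f₁ x).fderiv, (hasF_f₃ x h).fderiv]
  funext i
  fin_cases i <;>
    (simp only [Pi.sub_apply, ContinuousLinearMap.pi_apply, Matrix.cons_val_zero,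
      Matrix.cons_val_one, Matrix.head_cons, Matrix.cons_val_succ, Fin.isValue,
      ContinuousLinearMap.add_apply, ContinuousLinearMap.coe_smul', Pi.smul_apply,
      P, ContinuousLinearMap.proj_apply, ContinuousLinearMap.zero_apply, f₁, f₃,
      smul_eq_mul, Real.tan_eq_sin_div_cos, vec6_five, Fin.reduceFinMk, Matrix.cons_val]
     try field_simp
     try ring)

lemma lie14_eq (x : V6) (h : Real.cos (x 4) ≠ 0) :
    lieBracket f₁ f₄ x =
      ![-(Real.sin (x 3) * Real.sin (x 4) * Real.cos (x 5)) + Real.cos (x 3) * Real.sin (x 5),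
        -(Real.sin (x 3) * Real.sin (x 4) * Real.sin (x 5)) - Real.cos (x 3) * Real.cos (x 5),
        -(Real.sin (x 3) * Real.cos (x 4)), 0, 0, 0] := by
  unfold lieBracket
  rw [(hasF_f₁ x).fderiv, (hasF_f₄ x h).fderiv]
  funext i
  fin_cases i <;>
    (simp only [Pi.sub_apply, ContinuousLinearMap.pi_apply, Matrix.cons_val_zero,
      Matrix.cons_val_one, Matrix.head_cons, Matrix.cons_val_succ, Fin.isValue,
      ContinuousLinearMap.add_apply, ContinuousLinearMap.coe_smul', Pi.smul_apply,
      P, ContinuousLinearMap.proj_apply, ContinuousLinearMap.zero_apply, f₁, f₄,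
      smul_eq_mul, Real.tan_eq_sin_div_cos, vec6_five, Fin.reduceFinMk, Matrix.cons_val]
     try field_simp
     try ring)

set_option maxHeartbeats 1000000 in
set_option maxRecDepth 10000 in
lemma det_ne (x : V6) (h : Real.cos (x 4) ≠ 0) :
    (Matrix.of ![f₁ x, f₂ x, f₃ x, f₄ x,
      lieBracket f₁ f₃ x, lieBracket f₁ f₄ x]).det ≠ 0 := by
  rw [lie13_eq x h, lie14_eq x h]
  simp only [f₁, f₂, f₃, f₄, Real.tan_eq_sin_div_cos]
  simp [Matrix.det_succ_row_zero, Fin.sum_univ_succ, Matrix.cons_val, Fin.succAbove_of_castSucc_lt,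
    Fin.succAbove_of_le_castSucc]
  have h3 := Real.sin_sq_add_cos_sq (x 3)
  have h4 := Real.sin_sq_add_cos_sq (x 4)
  have h5 := Real.sin_sq_add_cos_sq (x 5)
  intro heq
  field_simp at heq
  refine h (sq_eq_zero_iff.mp ?_)
  linear_combination Real.cos (x 4)^2 * heq
    - (Real.cos (x 4)^2 * ((Real.sin (x 3)^2 + Real.cos (x 3)^2 + 1)
        * (Real.sin (x 4)^2 + Real.cos (x 4)^2)
        * (Real.sin (x 5)^2 + Real.cos (x 5)^2))) * h3
    - (Real.cos (x 4)^2 * (Real.sin (x 5)^2 + Real.cos (x 5)^2)) * h4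
    - Real.cos (x 4)^2 * h5

/-- Rank condition for the 3D underwater vehicle: the six vectors
f₁, f₂, f₃, f₄, [f₁,f₃], [f₁,f₄] are linearly independent, i.e. span ℝ⁶,
on D = {|x₅| < π/2}. -/
theorem stmt_16 (x : V6) (hx : |x 4| < π / 2) :
    LinearIndependent ℝ
      ![f₁ x, f₂ x, f₃ x, f₄ x, lieBracket f₁ f₃ x, lieBracket f₁ f₄ x] ∧
    Submodule.span ℝ
      {f₁ x, f₂ x, f₃ x, f₄ x, lieBracket f₁ f₃ x, lieBracket f₁ f₄ x} = ⊤ := by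
  have hc : Real.cos (x 4) ≠ 0 := by
    have h1 := abs_lt.mp hx
    exact ne_of_gt (Real.cos_pos_of_mem_Ioo ⟨h1.1, h1.2⟩)
  have hdet := det_ne x hc
  have hli : LinearIndependent ℝ
      (fun i => (Matrix.of ![f₁ x, f₂ x, f₃ x, f₄ x,
        lieBracket f₁ f₃ x, lieBracket f₁ f₄ x]) i) :=
    Matrix.linearIndependent_rows_iff_isUnit.mpr
      ((Matrix.isUnit_iff_isUnit_det _).mpr (isUnit_iff_ne_zero.mpr hdet))
  have hli' : LinearIndependent ℝ
      ![f₁ x, f₂ x, f₃ x, f₄ x, lieBracket f₁ f₃ x, lieBracket f₁ f₄ x] := hli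
  refine ⟨hli', ?_⟩
  have hsp := hli'.span_eq_top_of_card_eq_finrank (by simp)
  rw [← hsp]
  congr 1
  ext v
  simp [Matrix.range_cons, Matrix.range_empty]
  tauto

end
end

section
/- Let r_k ≥ 0 satisfy r_{k+1} ≤ (1 − ε(λ + ν_k/ρ'))r_k + εν_k with ν_k → 0, where ε, λ, ρ' > 0, ελ < 1, and r_k ≤ ρ' for all k. Then r_k → 0 as k → ∞. (This is the discrete analogue of Corollary 1: if ‖γ̇(t)‖ → 0, then the tracking error ‖x(t) − γ(t)‖ → 0.) -/
open Filter

/-- Discrete analogue of Corollary 1: if the disturbance νₖ tends to 0, the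
tracking error tends to 0. -/
theorem stmt_18 (ε lam ρ' : ℝ) (hε : 0 < ε) (hlam : 0 < lam) (hρ' : 0 < ρ')
    (hεlam : ε * lam < 1)
    (ν : ℕ → ℝ) (hν : ∀ k, 0 ≤ ν k) (hν0 : Tendsto ν atTop (nhds 0))
    (r : ℕ → ℝ) (hr : ∀ k, 0 ≤ r k) (hrρ : ∀ k, r k ≤ ρ')
    (hrec : ∀ k, r (k + 1) ≤ (1 - ε * (lam + ν k / ρ')) * r k + ε * ν k) :
    Tendsto r atTop (nhds 0) := by
  set a : ℝ := 1 - ε * lam with ha_def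
  have ha0 : 0 < a := by simp [ha_def]; linarith
  have ha1 : a < 1 := by
    have := mul_pos hε hlam
    simp only [ha_def]; linarith
  have key : ∀ k, r (k + 1) ≤ a * r k + ε * ν k := by
    intro k
    have h1 : 0 ≤ ε * (ν k / ρ') * r k :=
      mul_nonneg (mul_nonneg hε.le (div_nonneg (hν k) hρ'.le)) (hr k)
    have := hrec k
    simp only [ha_def]
    nlinarith
  rw [Metric.tendsto_atTop]
  intro δ hδ
  set δ' : ℝ := δ / 3 with hδ'_def
  have hδ'0 : 0 < δ' := by positivity
  have hb : 0 < δ' * (1 - a) / ε := by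
    apply div_pos (mul_pos hδ'0 (by linarith)) hε
  obtain ⟨N₁, hN₁⟩ := (Metric.tendsto_atTop.1 hν0) (δ' * (1 - a) / ε) hb
  have hνsmall : ∀ k ≥ N₁, ν k < δ' * (1 - a) / ε := by
    intro k hk
    have := hN₁ k hk
    rw [Real.dist_eq, sub_zero, abs_of_nonneg (hν k)] at this
    exact this
  have ind : ∀ m, r (N₁ + m) ≤ a ^ m * ρ' + δ' := by
    intro m
    induction m with
    | zero => simpa using le_trans (hrρ N₁) (by linarith)
    | succ m ih =>
      have h1 := key (N₁ + m)
      have h2 : ν (N₁ + m) < δ' * (1 - a) / ε := hνsmall _ (Nat.le_add_right _ _)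
      have h3 : ε * ν (N₁ + m) < δ' * (1 - a) := by
        rw [lt_div_iff₀ hε] at h2
        linarith [h2]
      have h4 : a * r (N₁ + m) ≤ a * (a ^ m * ρ' + δ') :=
        mul_le_mul_of_nonneg_left ih ha0.le
      have : r (N₁ + m + 1) ≤ a * (a ^ m * ρ') + δ' := by nlinarith
      calc r (N₁ + (m + 1)) = r (N₁ + m + 1) := by ring_nf
    _ ≤ a * (a ^ m * ρ') + δ' := this
    _ = a ^ (m + 1) * ρ' + δ' := by ring
  obtain ⟨M, hM⟩ : ∃ M : ℕ, a ^ M * ρ' < δ' := by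
    obtain ⟨M, hM⟩ := exists_pow_lt_of_lt_one (show (0:ℝ) < δ' / ρ' by positivity) ha1
    exact ⟨M, by rwa [← lt_div_iff₀ hρ']⟩
  refine ⟨N₁ + M, fun n hn => ?_⟩
  rw [Real.dist_eq, sub_zero, abs_of_nonneg (hr n)]
  have hn' : n = N₁ + (n - N₁) := by omega
  have hmM : M ≤ n - N₁ := by omega
  have hpow : a ^ (n - N₁) ≤ a ^ M :=
    pow_le_pow_of_le_one ha0.le ha1.le hmM
  have := ind (n - N₁)
  rw [← hn'] at this
  have : r n ≤ a ^ M * ρ' + δ' := le_trans this (by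
    have := mul_le_mul_of_nonneg_right hpow hρ'.le
    linarith)
  linarith
end
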